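/- Let A ∈ ℝ^{m×n}, let Θ ∈ ℝ^{n×n} be diagonal with strictly positive diagonal entries, and let R_d ∈ ℝ^{m×m} be symmetric positive definite. Then the symmetric (n+m)×(n+m) matrix M = [[−Θ^{-1}, Aᵀ],[A, R_d]] is nonsingular and has exactly n strictly negative eigenvalues and exactly m strictly positive eigenvalues, counted with multiplicity. -/

import Mathlib

open Matrix Finset

section Aux


variable {ι : Type*} [Fintype ι] [DecidableEq ι]

/-- Spectral decomposition of the quadratic form of a real symmetric matrix. -/
lemma quad_form_eq_sum_eig (B : Matrix ι ι ℝ) (hB : B.IsHermitian) (x : ι → ℝ) :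
    x ⬝ᵥ (B *ᵥ x) = ∑ i, hB.eigenvalues i * ((star (hB.eigenvectorUnitary : Matrix ι ι ℝ)) *ᵥ x) i ^ 2 := by
  set U : Matrix ι ι ℝ := (hB.eigenvectorUnitary : Matrix ι ι ℝ) with hU
  set y : ι → ℝ := star U *ᵥ x with hy
  have hxU : x ᵥ* U = y := by
    funext i
    simp [hy, Matrix.vecMul, Matrix.mulVec, dotProduct, Matrix.star_apply, mul_comm]
  conv_lhs => rw [hB.spectral_theorem, Unitary.conjStarAlgAut_apply]
  rw [← Matrix.mulVec_mulVec, ← Matrix.mulVec_mulVec, Matrix.dotProduct_mulVec, hxU]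
  have hD : Matrix.diagonal (RCLike.ofReal ∘ hB.eigenvalues) = Matrix.diagonal hB.eigenvalues := by
    norm_num [Function.comp]
  rw [hD]
  simp only [dotProduct, Matrix.mulVec_diagonal, sq]
  exact Finset.sum_congr rfl fun i _ => by ring

end Aux

/-- With `Θ` diagonal with positive diagonal entries and `R_d` symmetric positive
definite, the symmetric matrix `M = [[−Θ⁻¹, Aᵀ],[A, R_d]]` is nonsingular and has
exactly `n` strictly negative and exactly `m` strictly positive eigenvalues,
counted with multiplicity. -/

theorem stmt_8 {m n : ℕ} (A : Matrix (Fin m) (Fin n) ℝ)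
    (d : Fin n → ℝ) (hd : ∀ j, 0 < d j)
    (Rd : Matrix (Fin m) (Fin m) ℝ) (hRd : Rd.PosDef)
    (M : Matrix (Fin n ⊕ Fin m) (Fin n ⊕ Fin m) ℝ)
    (hMdef : M = Matrix.fromBlocks (-(Matrix.diagonal d)⁻¹) Aᵀ A Rd)
    (hM : M.IsHermitian) :
    M.det ≠ 0 ∧
    (Finset.univ.filter fun i => hM.eigenvalues i < 0).card = n ∧
    (Finset.univ.filter fun i => 0 < hM.eigenvalues i).card = m := by
  set μ := hM.eigenvalues with hμ
  set U : Matrix (Fin n ⊕ Fin m) (Fin n ⊕ Fin m) ℝ := (hM.eigenvectorUnitary : Matrix (Fin n ⊕ Fin m) (Fin n ⊕ Fin m) ℝ) with hU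
  set Sneg : Finset (Fin n ⊕ Fin m) := Finset.univ.filter (fun i => μ i < 0) with hSneg
  set Spos : Finset (Fin n ⊕ Fin m) := Finset.univ.filter (fun i => 0 < μ i) with hSpos
  have hkey : ∀ x : (Fin n ⊕ Fin m) → ℝ,
      x ⬝ᵥ (M *ᵥ x) = ∑ i, μ i * ((star U) *ᵥ x) i ^ 2 :=
    fun x => quad_form_eq_sum_eig M hM x
  -- invertibility of diagonal d
  have hddet : (Matrix.diagonal d).det ≠ 0 := by
    simp only [Matrix.det_diagonal]
    exact Finset.prod_ne_zero_iff.2 fun j _ => (hd j).ne'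
  have hdinv : (Matrix.diagonal d)⁻¹ = Matrix.diagonal (fun j => (d j)⁻¹) := by
    apply Matrix.inv_eq_right_inv
    rw [Matrix.diagonal_mul_diagonal]
    convert Matrix.diagonal_one with j
    exact mul_inv_cancel₀ (hd j).ne'
  -- quadratic form on the first block
  have hQ1 : ∀ v : Fin n → ℝ,
      (Sum.elim v 0) ⬝ᵥ (M *ᵥ Sum.elim v 0) = -(∑ j, (d j)⁻¹ * v j ^ 2) := by
    intro v
    rw [hMdef, Matrix.fromBlocks_mulVec, sumElim_dotProduct_sumElim]
    simp [hdinv, Matrix.neg_mulVec, dotProduct, Matrix.mulVec_diagonal, sq,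
      mul_comm, mul_assoc]
  -- quadratic form on the second block
  have hQ2 : ∀ w : Fin m → ℝ,
      (Sum.elim (Matrix.diagonal d *ᵥ (Aᵀ *ᵥ w)) w) ⬝ᵥ
        (M *ᵥ Sum.elim (Matrix.diagonal d *ᵥ (Aᵀ *ᵥ w)) w)
      = (Aᵀ *ᵥ w) ⬝ᵥ (Matrix.diagonal d *ᵥ (Aᵀ *ᵥ w)) + w ⬝ᵥ (Rd *ᵥ w) := by
    intro w
    set z : Fin n → ℝ := Aᵀ *ᵥ w with hz
    set u : Fin n → ℝ := Matrix.diagonal d *ᵥ z with hu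
    have hcanc : (-(Matrix.diagonal d)⁻¹) *ᵥ u + Aᵀ *ᵥ w = 0 := by
      rw [Matrix.neg_mulVec, hu, Matrix.mulVec_mulVec,
        Matrix.nonsing_inv_mul _ (Ne.isUnit hddet), Matrix.one_mulVec]
      simp [hz]
    rw [hMdef, Matrix.fromBlocks_mulVec]
    simp only [Sum.elim_comp_inl, Sum.elim_comp_inr]
    rw [hcanc, sumElim_dotProduct_sumElim]
    rw [dotProduct_zero, zero_add, dotProduct_add]
    have : w ⬝ᵥ (A *ᵥ u) = z ⬝ᵥ u := by
      rw [Matrix.dotProduct_mulVec, hz, Matrix.mulVec_transpose]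
    rw [this]
  -- n ≤ #Sneg
  have hL1 : n ≤ Sneg.card := by
    let L1 : (Fin n → ℝ) →ₗ[ℝ] (↥Sneg → ℝ) :=
      { toFun := fun v i => ((star U) *ᵥ Sum.elim v 0) i.1
        map_add' := by
          intro v w
          funext i
          have h : (Sum.elim (v + w) (0 : Fin m → ℝ)) = Sum.elim v 0 + Sum.elim w 0 := by
            funext j; cases j <;> simp
          simp [h, Matrix.mulVec_add]
        map_smul' := by
          intro c v
          funext i
          have h : (Sum.elim (c • v) (0 : Fin m → ℝ)) = c • Sum.elim v 0 := by
            funext j; cases j <;> simp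
          simp [h, Matrix.mulVec_smul] }
    have hinj : Function.Injective L1 := by
      rw [injective_iff_map_eq_zero]
      intro v hv
      by_contra hvne
      have hQnonneg : 0 ≤ (Sum.elim v 0) ⬝ᵥ (M *ᵥ Sum.elim v 0) := by
        rw [hkey]
        apply Finset.sum_nonneg
        intro i _
        by_cases hi : μ i < 0
        · have h0 : ((star U) *ᵥ Sum.elim v 0) i = 0 := by
            have := congrFun hv ⟨i, by simp [hSneg, hi]⟩
            simpa [L1] using this
          rw [h0]
          simp
        · exact mul_nonneg (le_of_not_gt hi) (sq_nonneg _)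
      rw [hQ1 v] at hQnonneg
      have hterm : ∀ j ∈ Finset.univ, 0 ≤ (d j)⁻¹ * v j ^ 2 := fun j _ =>
        mul_nonneg (inv_nonneg.2 (hd j).le) (sq_nonneg _)
      have hsum0 : ∑ j, (d j)⁻¹ * v j ^ 2 = 0 :=
        le_antisymm (by linarith [Finset.sum_nonneg hterm]) (Finset.sum_nonneg hterm)
      have hzero : ∀ j, v j = 0 := by
        intro j
        have := (Finset.sum_eq_zero_iff_of_nonneg hterm).1 hsum0 j (Finset.mem_univ j)
        have hdj : (d j)⁻¹ ≠ 0 := inv_ne_zero (hd j).ne'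
        have := mul_eq_zero.1 this
        rcases this with h | h
        · exact absurd h hdj
        · exact pow_eq_zero_iff (by norm_num) |>.1 h
      exact hvne (funext hzero)
    have := LinearMap.finrank_le_finrank_of_injective hinj
    rwa [Module.finrank_fin_fun, Module.finrank_fintype_fun_eq_card, Fintype.card_coe] at this
  -- m ≤ #Spos
  have hL2 : m ≤ Spos.card := by
    let T : (Fin m → ℝ) → ((Fin n ⊕ Fin m) → ℝ) := fun w =>
      Sum.elim (Matrix.diagonal d *ᵥ (Aᵀ *ᵥ w)) w
    let L2 : (Fin m → ℝ) →ₗ[ℝ] (↥Spos → ℝ) :=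
      { toFun := fun w i => ((star U) *ᵥ T w) i.1
        map_add' := by
          intro v w
          funext i
          have h : T (v + w) = T v + T w := by
            funext j; cases j <;> simp [T, Matrix.mulVec_add]
          simp [h, Matrix.mulVec_add]
        map_smul' := by
          intro c w
          funext i
          have h : T (c • w) = c • T w := by
            funext j; cases j <;> simp [T, Matrix.mulVec_smul]
          simp [h, Matrix.mulVec_smul] }
    have hinj : Function.Injective L2 := by
      rw [injective_iff_map_eq_zero]
      intro w hw
      by_contra hwne
      have hQnonpos : (T w) ⬝ᵥ (M *ᵥ T w) ≤ 0 := by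
        rw [hkey]
        apply Finset.sum_nonpos
        intro i _
        by_cases hi : 0 < μ i
        · have h0 : ((star U) *ᵥ T w) i = 0 := by
            have := congrFun hw ⟨i, by simp [hSpos, hi]⟩
            simpa [L2] using this
          rw [h0]
          simp
        · exact mul_nonpos_of_nonpos_of_nonneg (le_of_not_gt hi) (sq_nonneg _)
      have hQval := hQ2 w
      have hfirst : 0 ≤ (Aᵀ *ᵥ w) ⬝ᵥ (Matrix.diagonal d *ᵥ (Aᵀ *ᵥ w)) := by
        simp only [dotProduct, Matrix.mulVec_diagonal]
        apply Finset.sum_nonneg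
        intro j _
        have : (Aᵀ *ᵥ w) j * (d j * (Aᵀ *ᵥ w) j) = d j * ((Aᵀ *ᵥ w) j) ^ 2 := by ring
        rw [this]
        exact mul_nonneg (hd j).le (sq_nonneg _)
      have hsecond : 0 < w ⬝ᵥ (Rd *ᵥ w) := by
        have := hRd.dotProduct_mulVec_pos hwne
        simpa using this
      change (T w) ⬝ᵥ (M *ᵥ T w) = _ at hQval
      linarith
    have := LinearMap.finrank_le_finrank_of_injective hinj
    rwa [Module.finrank_fin_fun, Module.finrank_fintype_fun_eq_card, Fintype.card_coe] at this
  -- counting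
  have hdisj : Disjoint Sneg Spos := by
    rw [Finset.disjoint_left]
    intro i hi hi'
    rw [hSneg, Finset.mem_filter] at hi
    rw [hSpos, Finset.mem_filter] at hi'
    exact absurd hi'.2 (not_lt.2 hi.2.le)
  have hcardu : Fintype.card (Fin n ⊕ Fin m) = n + m := by simp
  have hle : Sneg.card + Spos.card ≤ n + m := by
    rw [← Finset.card_union_of_disjoint hdisj, ← hcardu]
    exact Finset.card_le_univ _
  have e1 : Sneg.card = n := by omega
  have e2 : Spos.card = m := by omega
  refine ⟨?_, e1, e2⟩
  have huniv : Sneg ∪ Spos = Finset.univ := by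
    apply Finset.eq_univ_of_card
    rw [Finset.card_union_of_disjoint hdisj, e1, e2, hcardu]
  have hne : ∀ i, μ i ≠ 0 := by
    intro i
    have : i ∈ Sneg ∪ Spos := huniv ▸ Finset.mem_univ i
    rcases Finset.mem_union.1 this with h | h
    · rw [hSneg, Finset.mem_filter] at h
      exact h.2.ne
    · rw [hSpos, Finset.mem_filter] at h
      exact h.2.ne'
  rw [hM.det_eq_prod_eigenvalues]
  exact Finset.prod_ne_zero_iff.2 fun i _ => hne i
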